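/- Conservation across elements (first part of Theorem 1): under the stated summation-by-parts hypotheses, for every k ∈ {0,…,M} the semidiscrete right-hand side satisfies 𝟙ᵀ·P·RHS_k = −𝟙ᵀ·Rᵀ·B·f^num_k, i.e. the rate of change of the discrete integral of u_k over the element equals the difference of the numerical fluxes at the element boundary. -/

import Mathlib

open Matrix

section Aux

variable {m n : Type*} [Fintype m] [Fintype n]

private lemma dot_sum' {ι : Type*} (s : Finset ι) (w : n → ℝ) (f : ι → n → ℝ) :
    w ⬝ᵥ (∑ i ∈ s, f i) = ∑ i ∈ s, w ⬝ᵥ f i := by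
  simp only [dotProduct, Finset.sum_apply, Finset.mul_sum]
  exact Finset.sum_comm

private lemma mulVec_sum' {ι : Type*} (s : Finset ι) (A : Matrix m n ℝ) (f : ι → n → ℝ) :
    A *ᵥ (∑ i ∈ s, f i) = ∑ i ∈ s, A *ᵥ f i := by
  ext x
  simp only [mulVec, dotProduct, Finset.sum_apply, Finset.mul_sum]
  exact Finset.sum_comm

end Aux

/-- Conservation across elements (first part of Theorem 1): under the SBP hypotheses,
`𝟙ᵀ P RHS_k = -𝟙ᵀ Rᵀ B f^num_k` for every component `k`. -/
theorem stmt_12 (p M : ℕ) (c : Fin (M+1) → Fin (M+1) → Fin (M+1) → ℝ)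
    (hsymm₁ : ∀ i j k, c i j k = c j i k)
    (hsymm₂ : ∀ i j k, c i j k = c i k j)
    (P D : Matrix (Fin (p+1)) (Fin (p+1)) ℝ)
    (hP : P.PosDef)
    (hD : D.mulVec (fun _ => 1) = 0)
    (R : Matrix (Fin 2) (Fin (p+1)) ℝ)
    (hR : R.mulVec (fun _ => 1) = fun _ => 1)
    (B : Matrix (Fin 2) (Fin 2) ℝ)
    (hB : B = Matrix.diagonal ![(-1 : ℝ), 1])
    (hSBP : P * D + Dᵀ * P = Rᵀ * B * R)
    (u : Fin (M+1) → Fin (p+1) → ℝ)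
    (fnum : Fin (M+1) → Fin 2 → ℝ)
    (RHS : Fin (M+1) → Fin (p+1) → ℝ)
    (hRHS : ∀ k, RHS k =
      -((1/3 : ℝ) • ∑ i, ∑ j, c i j k •
          (D.mulVec (u i * u j) + (P⁻¹ * Matrix.diagonal (u j) * P * D).mulVec (u i)))
      - (P⁻¹ * Rᵀ * B).mulVec (fnum k - ∑ i, ∑ j, c i j k •
          ((1/3 : ℝ) • R.mulVec (u i * u j)
            + (1/6 : ℝ) • (R.mulVec (u i) * R.mulVec (u j)))))
    (k : Fin (M+1)) :
    (fun _ => (1:ℝ)) ⬝ᵥ P.mulVec (RHS k)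
      = -((fun _ => (1:ℝ)) ⬝ᵥ (Rᵀ * B).mulVec (fnum k)) := by
  classical
  set e : Fin (p+1) → ℝ := fun _ => (1:ℝ) with he
  set eb : Fin 2 → ℝ := fun _ => (1:ℝ) with heb
  have hPdet : IsUnit P.det := isUnit_iff_ne_zero.mpr hP.det_pos.ne'
  have hPP : P * P⁻¹ = 1 := Matrix.mul_nonsing_inv P hPdet
  have hPt : Pᵀ = P := by
    have := hP.1
    simpa [Matrix.IsHermitian, Matrix.conjTranspose_eq_transpose_of_trivial] using this
  have hRe : e ᵥ* Rᵀ = eb := by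
    rw [vecMul_transpose]; exact hR
  have hRBe : e ᵥ* (Rᵀ * B) = eb ᵥ* B := by
    rw [← vecMul_vecMul, hRe]
  have KB : ∀ x y : Fin 2 → ℝ, (eb ᵥ* B) ⬝ᵥ (x * y) = x ⬝ᵥ B *ᵥ y := by
    intro x y
    subst hB
    simp [vecMul, mulVec, dotProduct, Fin.sum_univ_two, Matrix.diagonal, heb]
    try ring
  have keyRB : ∀ v : Fin 2 → ℝ, e ⬝ᵥ (Rᵀ * B) *ᵥ v = (eb ᵥ* B) ⬝ᵥ v := by
    intro v
    rw [dotProduct_mulVec, hRBe]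
  have keyPD : ∀ v : Fin (p+1) → ℝ, e ⬝ᵥ (P * D) *ᵥ v = (eb ᵥ* B) ⬝ᵥ (R *ᵥ v) := by
    intro v
    have h1 : e ᵥ* (Dᵀ * P) = 0 := by
      rw [← vecMul_vecMul, vecMul_transpose, hD]
      ext x
      simp [vecMul, dotProduct]
    have h2 : e ᵥ* (P * D) = ((eb ᵥ* B) ᵥ* R) := by
      have h3 := congrArg (fun A => e ᵥ* A) hSBP
      simp only [Matrix.vecMul_add, h1, add_zero] at h3
      rw [h3, ← vecMul_vecMul, hRBe]
    rw [dotProduct_mulVec, h2, ← dotProduct_mulVec]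
  have keyQ : ∀ v w : Fin (p+1) → ℝ,
      w ⬝ᵥ (P * D) *ᵥ v + v ⬝ᵥ (P * D) *ᵥ w = (eb ᵥ* B) ⬝ᵥ ((R *ᵥ w) * (R *ᵥ v)) := by
    intro v w
    have h1 : v ⬝ᵥ (P * D) *ᵥ w = w ⬝ᵥ (Dᵀ * P) *ᵥ v := by
      rw [dotProduct_mulVec, ← mulVec_transpose (P * D) v, Matrix.transpose_mul, hPt,
        dotProduct_comm]
    rw [h1, ← dotProduct_add, ← Matrix.add_mulVec, hSBP]
    rw [← mulVec_mulVec, dotProduct_mulVec, ← vecMul_vecMul, vecMul_transpose,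
      ← dotProduct_mulVec, ← KB]
  have keyDiag : ∀ i j : Fin (M+1),
      e ⬝ᵥ P *ᵥ ((P⁻¹ * Matrix.diagonal (u j) * P * D) *ᵥ u i)
        = u j ⬝ᵥ (P * D) *ᵥ u i := by
    intro i j
    rw [mulVec_mulVec]
    have h4 : P * (P⁻¹ * Matrix.diagonal (u j) * P * D)
        = Matrix.diagonal (u j) * (P * D) := by
      rw [show P⁻¹ * Matrix.diagonal (u j) * P * D
          = P⁻¹ * (Matrix.diagonal (u j) * (P * D)) by simp [mul_assoc],
        ← mul_assoc, hPP, one_mul]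
    rw [h4, ← mulVec_mulVec, dotProduct_mulVec]
    congr 1
    ext x
    simp [vecMul_diagonal, he]
  have keyBdry : ∀ v : Fin 2 → ℝ,
      e ⬝ᵥ P *ᵥ ((P⁻¹ * Rᵀ * B) *ᵥ v) = (eb ᵥ* B) ⬝ᵥ v := by
    intro v
    rw [mulVec_mulVec, show P * (P⁻¹ * Rᵀ * B) = Rᵀ * B by
      rw [Matrix.mul_assoc P⁻¹ Rᵀ B, ← Matrix.mul_assoc P P⁻¹ (Rᵀ * B), hPP, Matrix.one_mul]]
    exact keyRB v
  -- expand the right-hand side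
  rw [hRHS k, Matrix.mulVec_sub, dotProduct_sub, keyBdry, dotProduct_sub,
    Matrix.mulVec_neg, Matrix.mulVec_smul, dotProduct_neg, dotProduct_smul,
    mulVec_sum', dot_sum', keyRB (fnum k)]
  have hcorr : ((eb ᵥ* B) ⬝ᵥ ∑ i, ∑ j, c i j k •
      ((1/3 : ℝ) • R *ᵥ (u i * u j) + (1/6 : ℝ) • (R *ᵥ u i * R *ᵥ u j)))
      = (1/3) * (∑ i, ∑ j, c i j k * ((eb ᵥ* B) ⬝ᵥ (R *ᵥ (u i * u j))))
        + (1/6) * (∑ i, ∑ j, c i j k * ((eb ᵥ* B) ⬝ᵥ (R *ᵥ u i * R *ᵥ u j))) := by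
    rw [dot_sum']
    simp only [dot_sum', dotProduct_smul, dotProduct_add, smul_eq_mul]
    rw [Finset.mul_sum, Finset.mul_sum, ← Finset.sum_add_distrib]
    refine Finset.sum_congr rfl fun i _ => ?_
    rw [Finset.mul_sum, Finset.mul_sum, ← Finset.sum_add_distrib]
    refine Finset.sum_congr rfl fun j _ => ?_
    ring
  rw [hcorr]
  have hint : (∑ i, e ⬝ᵥ P *ᵥ ∑ j, c i j k •
      (D *ᵥ (u i * u j) + (P⁻¹ * Matrix.diagonal (u j) * P * D) *ᵥ u i))
      = (∑ i, ∑ j, c i j k * ((eb ᵥ* B) ⬝ᵥ (R *ᵥ (u i * u j))))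
        + (∑ i, ∑ j, c i j k * (u j ⬝ᵥ (P * D) *ᵥ u i)) := by
    rw [← Finset.sum_add_distrib]
    refine Finset.sum_congr rfl fun i _ => ?_
    rw [mulVec_sum', dot_sum', ← Finset.sum_add_distrib]
    refine Finset.sum_congr rfl fun j _ => ?_
    rw [Matrix.mulVec_smul, dotProduct_smul, Matrix.mulVec_add, dotProduct_add,
      mulVec_mulVec, keyPD, keyDiag]
    simp [smul_eq_mul, mul_add]
  rw [hint]
  -- symmetrization
  have hsym : (∑ i, ∑ j, c i j k * (u j ⬝ᵥ (P * D) *ᵥ u i))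
      = (1/2) * ∑ i, ∑ j, c i j k * ((eb ᵥ* B) ⬝ᵥ (R *ᵥ u i * R *ᵥ u j)) := by
    have swap : (∑ i, ∑ j, c i j k * (u j ⬝ᵥ (P * D) *ᵥ u i))
        = ∑ i, ∑ j, c i j k * (u i ⬝ᵥ (P * D) *ᵥ u j) := by
      rw [Finset.sum_comm]
      exact Finset.sum_congr rfl fun i _ => Finset.sum_congr rfl fun j _ => by
        rw [hsymm₁ j i k]
    have comb : (∑ i, ∑ j, c i j k * (u j ⬝ᵥ (P * D) *ᵥ u i))
          + (∑ i, ∑ j, c i j k * (u j ⬝ᵥ (P * D) *ᵥ u i))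
        = ∑ i, ∑ j, c i j k * ((eb ᵥ* B) ⬝ᵥ (R *ᵥ u i * R *ᵥ u j)) := by
      nth_rewrite 2 [swap]
      rw [← Finset.sum_add_distrib]
      refine Finset.sum_congr rfl fun i _ => ?_
      rw [← Finset.sum_add_distrib]
      refine Finset.sum_congr rfl fun j _ => ?_
      have hk := keyQ (u i) (u j)
      rw [mul_comm (R *ᵥ u j) (R *ᵥ u i)] at hk
      rw [← mul_add, hk]
    linarith [comb]
  rw [hsym]
  set SA := ∑ i, ∑ j, c i j k * ((eb ᵥ* B) ⬝ᵥ (R *ᵥ (u i * u j))) with hSA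
  set Sq := ∑ i, ∑ j, c i j k * ((eb ᵥ* B) ⬝ᵥ (R *ᵥ u i * R *ᵥ u j)) with hSq
  simp only [smul_eq_mul]
  ring
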